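/- arXiv:1304.3412 — 2 statements merged into one kernel-verified Lean document; each statement's English description precedes it below -/
import Mathlib

section
/- Let C be an n-cycle in S_n and m a positive integer, d = gcd(m,n), n_0 = n/d. Then for any partition μ of n, the character value Tr_{π_μ}(C^m) equals Σ_{|λ|=d} (dim π_λ) · c_{λ,n_0}^μ, where c_{λ,n_0}^μ are defined by Ψ_{n_0}(s_λ) = Σ_μ c_{λ,n_0}^μ s_μ. -/
open MvPolynomial

/-- The ring of symmetric functions in infinitely many variables (with complex
coefficients), modeled as the polynomial ring on the power sums `p k`, `k ≥ 1`. -/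
abbrev SymmFnC : Type := MvPolynomial ℕ+ ℂ

/-- The power sum `p k`, for a natural number index `k ≥ 1` (junk value `1` at `k = 0`). -/
noncomputable def psymNC (k : ℕ) : SymmFnC := if h : 0 < k then X (⟨k, h⟩ : ℕ+) else 1

/-- Evaluation of a symmetric function as a symmetric polynomial in `N` variables. -/
noncomputable def pEvalC (N : ℕ) : SymmFnC →ₐ[ℂ] MvPolynomial (Fin N) ℂ :=
  aeval fun k : ℕ+ => ∑ r : Fin N, X r ^ (k : ℕ)

/-- The alternant `a_μ = det (x_r^{μ_c + (N-1-c)})`. -/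
noncomputable def alternantC (N : ℕ) (μ : ℕ → ℕ) : MvPolynomial (Fin N) ℂ :=
  Matrix.det (Matrix.of fun r c : Fin N =>
    (X r : MvPolynomial (Fin N) ℂ) ^ (μ (c : ℕ) + (N - 1 - (c : ℕ))))

/-- `s` is the family of Schur functions (indexed by weakly decreasing finitely
supported functions `ℕ → ℕ`) iff it satisfies the bialternant formula in every
sufficiently large number of variables. -/
def IsSchurFamilyC (s : (ℕ → ℕ) → SymmFnC) : Prop :=
  ∀ (μ : ℕ → ℕ) (N : ℕ), Antitone μ → (∀ j, N ≤ j → μ j = 0) →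
    pEvalC N (s μ) * alternantC N (fun _ => 0) = alternantC N μ

/-- The parts of a partition of `d`, in weakly decreasing order (0-indexed, `0` beyond
the number of parts). -/
def partsOf {d : ℕ} (lam : d.Partition) : ℕ → ℕ :=
  fun j => (lam.parts.sort (· ≥ ·)).getD j 0

/-- The power sum `p_ρ(σ)` attached to the cycle type of a permutation `σ ∈ S_d`
(including the fixed points as cycles of length 1). -/
noncomputable def cycleTypePoly (d : ℕ) (σ : Equiv.Perm (Fin d)) : SymmFnC :=
  psymNC 1 ^ (d - σ.cycleType.sum) * (σ.cycleType.map psymNC).prod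

/-- The Adams operation `Ψ_m`, determined by `Ψ_m(p_k) = p_{mk}`. -/
noncomputable def adamsC (m : ℕ+) : SymmFnC →ₐ[ℂ] SymmFnC :=
  aeval fun k : ℕ+ => X (m * k)

/-! ### auxiliary lemmas -/

lemma partsOf_antitone {d : ℕ} (lam : d.Partition) : Antitone (partsOf lam) := by
  intro i j hij
  unfold partsOf
  set L := lam.parts.sort (· ≥ ·) with hL
  by_cases hj : j < L.length
  · have hi : i < L.length := lt_of_le_of_lt hij hj
    rw [List.getD_eq_getElem _ _ hj, List.getD_eq_getElem _ _ hi]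
    rcases eq_or_lt_of_le hij with rfl | h
    · exact le_refl _
    · have hs : L.Pairwise (· ≥ ·) := Multiset.pairwise_sort _ _
      exact List.pairwise_iff_getElem.mp hs i j hi hj h
  · rw [List.getD_eq_default _ _ (le_of_not_gt hj)]
    exact Nat.zero_le _

lemma partsOf_length_le {d : ℕ} (lam : d.Partition) :
    (lam.parts.sort (· ≥ ·)).length ≤ d := by
  rw [Multiset.length_sort]
  have h1 : (Multiset.card lam.parts) • 1 ≤ lam.parts.sum :=
    Multiset.card_nsmul_le_sum (fun x hx => lam.parts_pos hx)
  simpa [lam.parts_sum] using h1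

lemma partsOf_eq_zero {d : ℕ} (lam : d.Partition) {j : ℕ} (hj : d ≤ j) :
    partsOf lam j = 0 := by
  unfold partsOf
  exact List.getD_eq_default _ _ ((partsOf_length_le lam).trans hj)

lemma partsOf_inj {d : ℕ} {lam ν : d.Partition} (h : partsOf lam = partsOf ν) :
    lam = ν := by
  have hmem : ∀ (μ : d.Partition) x, x ∈ μ.parts.sort (· ≥ ·) → 0 < x := by
    intro μ x hx
    exact μ.parts_pos ((Multiset.mem_sort _).mp hx)
  have hlist : lam.parts.sort (· ≥ ·) = ν.parts.sort (· ≥ ·) := by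
    set L := lam.parts.sort (· ≥ ·)
    set L' := ν.parts.sort (· ≥ ·)
    have hgetD : ∀ j, L.getD j 0 = L'.getD j 0 := fun j => congrFun h j
    have hlen : L.length = L'.length := by
      by_contra hne
      rcases Nat.lt_or_ge L.length L'.length with hlt | hge
      · have h0 : L'.getD L.length 0 = 0 := by
          rw [← hgetD]; exact List.getD_eq_default _ _ le_rfl
        rw [List.getD_eq_getElem _ _ hlt] at h0
        exact (hmem ν _ (List.getElem_mem _)).ne' h0
      · rcases Nat.lt_or_ge L'.length L.length with hlt' | hge'
        · have h0 : L.getD L'.length 0 = 0 := by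
            rw [hgetD]; exact List.getD_eq_default _ _ le_rfl
          rw [List.getD_eq_getElem _ _ hlt'] at h0
          exact (hmem lam _ (List.getElem_mem _)).ne' h0
        · omega
    apply List.ext_getElem hlen
    intro i h1 h2
    have := hgetD i
    rwa [List.getD_eq_getElem _ _ h1, List.getD_eq_getElem _ _ h2] at this
  have : lam.parts = ν.parts := by
    have h1 := Multiset.sort_eq (s := lam.parts) (r := (· ≥ ·))
    have h2 := Multiset.sort_eq (s := ν.parts) (r := (· ≥ ·))
    rw [← h1, ← h2, hlist]
  exact Nat.Partition.ext this

lemma prodXpow {N : ℕ} (g : Fin N → ℕ) :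
    (∏ i, (X i : MvPolynomial (Fin N) ℂ) ^ g i)
      = monomial (Finsupp.equivFunOnFinite.symm g) 1 := by
  rw [← prod_X_pow_eq_monomial]
  rw [Finset.prod_subset (Finset.subset_univ ((Finsupp.equivFunOnFinite.symm g).support))
    (fun i _ hi => by rw [Finsupp.notMem_support_iff.mp hi, pow_zero])]
  rfl

lemma strictAnti_shift {N : ℕ} (f : ℕ → ℕ) (hf : Antitone f) :
    StrictAnti (fun c : Fin N => f c + (N - 1 - (c : ℕ))) := by
  intro a b hab
  have h1 : f b ≤ f a := hf (le_of_lt hab)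
  have h2 : (b : ℕ) < N := b.isLt
  have h3 : (a : ℕ) < (b : ℕ) := hab
  simp only []
  omega

lemma strictMono_le_apply {N : ℕ} (u : Fin N → Fin N) (hm : StrictMono u) (i : Fin N) :
    (i : ℕ) ≤ (u i : ℕ) := by
  have hmap : Finset.image u (Finset.Iio i) ⊆ Finset.Iio (u i) := by
    intro j hj
    simp only [Finset.mem_image, Finset.mem_Iio] at hj ⊢
    obtain ⟨k, hk, rfl⟩ := hj
    exact hm hk
  have h1 : (Finset.image u (Finset.Iio i)).card = (i : ℕ) := by
    rw [Finset.card_image_of_injective _ hm.injective, Fin.card_Iio]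
  have h2 := Finset.card_le_card hmap
  rw [h1, Fin.card_Iio] at h2
  exact h2

lemma perm_eq_one_of_comp {N : ℕ} {f g : Fin N → ℕ} (hf : StrictAnti f) (hg : StrictAnti g)
    (w : Equiv.Perm (Fin N)) (h : ∀ r, f (w.symm r) = g r) : w = 1 ∧ ∀ r, f r = g r := by
  have hmono : StrictMono (w.symm : Fin N → Fin N) := by
    intro a b hab
    have : g b < g a := hg hab
    rw [← h a, ← h b] at this
    exact (hf.lt_iff_gt).mp this
  have hmono2 : StrictMono (w : Fin N → Fin N) := by
    intro a b hab
    have h' : w.symm (w a) < w.symm (w b) := by simpa using hab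
    exact hmono.lt_iff_lt.mp h'
  have hfix : ∀ i, w.symm i = i := by
    intro i
    have h1 := strictMono_le_apply _ hmono i
    have h2 := strictMono_le_apply _ hmono2 (w.symm i)
    rw [w.apply_symm_apply i] at h2
    exact Fin.ext (le_antisymm h2 h1)
  have hw : w = 1 := by
    apply Equiv.ext
    intro x
    have hx := hfix (w x)
    rw [w.symm_apply_apply] at hx
    simpa using hx.symm
  refine ⟨hw, fun r => ?_⟩
  have := h r
  rw [hw] at this
  simpa [Equiv.Perm.one_symm] using this

lemma coeff_alternantC {N : ℕ} (ν τ : ℕ → ℕ) (hν : Antitone ν) (hτ : Antitone τ) :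
    MvPolynomial.coeff (Finsupp.equivFunOnFinite.symm fun r : Fin N => τ r + (N - 1 - (r : ℕ)))
        (alternantC N ν)
      = if ∀ c : Fin N, ν c = τ c then 1 else 0 := by
  classical
  have hterm : ∀ w : Equiv.Perm (Fin N),
      (∏ i, (Matrix.of fun r c : Fin N =>
          (X r : MvPolynomial (Fin N) ℂ) ^ (ν (c : ℕ) + (N - 1 - (c : ℕ)))) (w i) i)
        = monomial (Finsupp.equivFunOnFinite.symm
            fun r : Fin N => ν ((w.symm r : Fin N) : ℕ) + (N - 1 - ((w.symm r : Fin N) : ℕ))) 1 := by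
    intro w
    rw [← prodXpow]
    rw [← Equiv.prod_comp w
      (fun r => (X r : MvPolynomial (Fin N) ℂ) ^ (ν ((w.symm r : Fin N) : ℕ) + (N - 1 - ((w.symm r : Fin N) : ℕ))))]
    refine Finset.prod_congr rfl (fun i _ => by simp [Matrix.of_apply])
  rw [alternantC, Matrix.det_apply', MvPolynomial.coeff_sum]
  have hsummand : ∀ w : Equiv.Perm (Fin N),
      MvPolynomial.coeff (Finsupp.equivFunOnFinite.symm fun r : Fin N => τ r + (N - 1 - (r : ℕ)))
        (((Equiv.Perm.sign w : ℤ) : MvPolynomial (Fin N) ℂ) * ∏ i, (Matrix.of fun r c : Fin N =>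
          (X r : MvPolynomial (Fin N) ℂ) ^ (ν (c : ℕ) + (N - 1 - (c : ℕ)))) (w i) i)
      = if w = 1 ∧ (∀ c : Fin N, ν c = τ c) then 1 else 0 := by
    intro w
    rw [hterm w]
    have hcast : ((Equiv.Perm.sign w : ℤ) : MvPolynomial (Fin N) ℂ)
        = C ((Equiv.Perm.sign w : ℤ) : ℂ) := by
      push_cast
      rfl
    rw [hcast, coeff_C_mul, coeff_monomial]
    by_cases hcond : w = 1 ∧ (∀ c : Fin N, ν c = τ c)
    · obtain ⟨hw1, hντ⟩ := hcond
      subst hw1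
      have hpos : (Finsupp.equivFunOnFinite.symm
            fun r : Fin N => ν (((1 : Equiv.Perm (Fin N)).symm r : Fin N) : ℕ)
              + (N - 1 - (((1 : Equiv.Perm (Fin N)).symm r : Fin N) : ℕ)))
          = (Finsupp.equivFunOnFinite.symm fun r : Fin N => τ (r : ℕ) + (N - 1 - (r : ℕ))) := by
        apply congrArg
        funext r
        simp [hντ r, Equiv.Perm.one_symm]
      rw [if_pos hpos, if_pos ⟨rfl, hντ⟩]
      simp
    · have hne : (Finsupp.equivFunOnFinite.symm
            fun r : Fin N => ν ((w.symm r : Fin N) : ℕ) + (N - 1 - ((w.symm r : Fin N) : ℕ)))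
          ≠ (Finsupp.equivFunOnFinite.symm fun r : Fin N => τ (r : ℕ) + (N - 1 - (r : ℕ))) := by
        intro heq
        have heq' : ∀ r : Fin N, ν ((w.symm r : Fin N) : ℕ) + (N - 1 - ((w.symm r : Fin N) : ℕ))
            = τ (r : ℕ) + (N - 1 - (r : ℕ)) := by
          intro r
          have := congrArg (fun q => Finsupp.equivFunOnFinite q r) heq
          simpa using this
        obtain ⟨hw1, hval⟩ :=
          perm_eq_one_of_comp (strictAnti_shift ν hν) (strictAnti_shift τ hτ) w heq'
        refine hcond ⟨hw1, fun c => ?_⟩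
        have := hval c
        have hc : (c : ℕ) < N := c.isLt
        omega
      rw [if_neg hcond, if_neg hne, mul_zero]
  rw [Finset.sum_congr rfl (fun w _ => hsummand w)]
  simp only [ite_and]
  rw [Finset.sum_ite_eq' Finset.univ (1 : Equiv.Perm (Fin N))
    (fun _ => if ∀ c : Fin N, ν c = τ c then (1 : ℂ) else 0)]
  simp

lemma schur_coeffs_unique {n : ℕ} (hn : 0 < n) (s : (ℕ → ℕ) → SymmFnC)
    (hs : IsSchurFamilyC s) (t : n.Partition → ℂ)
    (h : ∑ μ : n.Partition, t μ • s (partsOf μ) = 0) (μ₀ : n.Partition) : t μ₀ = 0 := by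
  classical
  have key : ∑ μ : n.Partition, t μ • alternantC n (partsOf μ) = 0 := by
    have h2 := congrArg (fun q => pEvalC n q * alternantC n (fun _ => 0)) h
    simp only [map_sum, map_smul, Finset.sum_smul, Finset.sum_mul, smul_mul_assoc, map_zero,
      zero_mul] at h2
    rw [← h2]
    refine Finset.sum_congr rfl (fun μ _ => ?_)
    rw [hs (partsOf μ) n (partsOf_antitone μ) (fun j hj => partsOf_eq_zero μ hj)]
  have hco := congrArg (MvPolynomial.coeff
    (Finsupp.equivFunOnFinite.symm fun r : Fin n => partsOf μ₀ r + (n - 1 - (r : ℕ)))) key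
  simp only [MvPolynomial.coeff_sum, MvPolynomial.coeff_smul, map_zero] at hco
  rw [Finset.sum_congr rfl (fun μ _ => by
    rw [coeff_alternantC (partsOf μ) (partsOf μ₀) (partsOf_antitone μ) (partsOf_antitone μ₀)])]
    at hco
  have hite : ∀ μ : n.Partition,
      (if ∀ c : Fin n, partsOf μ c = partsOf μ₀ c then (1 : ℂ) else 0)
        = if μ = μ₀ then 1 else 0 := by
    intro μ
    by_cases hμ : μ = μ₀
    · subst hμ; simp
    · rw [if_neg hμ, if_neg]
      intro hall
      apply hμ
      apply partsOf_inj
      funext j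
      by_cases hj : j < n
      · exact hall ⟨j, hj⟩
      · rw [partsOf_eq_zero μ (le_of_not_gt hj), partsOf_eq_zero μ₀ (le_of_not_gt hj)]
  rw [Finset.sum_congr rfl (fun μ _ => by rw [hite μ])] at hco
  simp only [smul_eq_mul, mul_ite, mul_one, mul_zero] at hco
  rw [Finset.sum_ite_eq' Finset.univ μ₀ t] at hco
  simpa using hco

lemma adams_psym1 (p : ℕ+) : adamsC p (psymNC 1) = psymNC (p : ℕ) := by
  unfold psymNC
  rw [dif_pos one_pos, dif_pos p.pos]
  unfold adamsC
  erw [aeval_X]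
  congr 1
  exact mul_one p

lemma cycleTypePoly_pow {m n d n0 : ℕ} (hm : 0 < m) (hn : 0 < n)
    (hd : d = Nat.gcd m n) (hn0pos : 0 < n0) (hn0 : n = n0 * d)
    (C : Equiv.Perm (Fin n)) (hC : C.cycleType = {n}) :
    cycleTypePoly n (C ^ m) = psymNC n0 ^ d := by
  have hd_pos : 0 < d := by rw [hd]; exact Nat.gcd_pos_of_pos_left _ hm
  have hcyc : C.IsCycle := Equiv.Perm.card_cycleType_eq_one.mp (by rw [hC]; rfl)
  have hsupp : C.support.card = n := by
    have h := Equiv.Perm.sum_cycleType C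
    rw [hC] at h
    simpa using h.symm
  have horder : orderOf C = n := by rw [hcyc.orderOf, hsupp]
  have hCx_univ : C.support = Finset.univ :=
    Finset.eq_univ_of_card _ (by rw [hsupp, Fintype.card_fin])
  have hdm : d ∣ m := hd ▸ Nat.gcd_dvd_left m n
  by_cases h1 : n0 = 1
  · subst h1
    have hnd : n = d := by omega
    have hCm1 : C ^ m = 1 := by
      apply orderOf_dvd_iff_pow_eq_one.mp
      rw [horder, hnd]
      exact hdm
    rw [hCm1]
    unfold cycleTypePoly
    rw [Equiv.Perm.cycleType_one]
    simp [hnd]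
  · have h2 : 2 ≤ n0 := by omega
    have hndvd : ¬ n ∣ m := by
      intro hdvd
      have hg : Nat.gcd m n = n := Nat.gcd_eq_right hdvd
      have hdn : d = n := by rw [hd, hg]
      rw [hdn] at hn0
      have : n0 = 1 := Nat.eq_of_mul_eq_mul_right hn (by rw [one_mul]; exact hn0.symm)
      omega
    have hall : ∀ b ∈ (C ^ m).cycleType, b = n0 := by
      intro b hb
      obtain ⟨cc, τ, hEq, hdisj, hcyc', hbcard⟩ := Equiv.Perm.mem_cycleType_iff.mp hb
      have hbord : orderOf cc = b := by rw [hcyc'.orderOf, hbcard]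
      have hnmn0 : n ∣ m * n0 := by
        obtain ⟨k, hk⟩ := hdm
        exact ⟨k, by rw [hk, hn0]; ring⟩
      have hpow1 : (cc * τ) ^ n0 = 1 := by
        rw [← hEq, ← pow_mul]
        apply orderOf_dvd_iff_pow_eq_one.mp
        rw [horder]
        exact hnmn0
      have hcc1 : cc ^ n0 = 1 :=
        ((hdisj.pow_disjoint_pow n0 n0).mul_eq_one_iff.mp
          (by rw [← (hdisj.commute).mul_pow]; exact hpow1)).1
      have hdvd1 : b ∣ n0 := hbord ▸ orderOf_dvd_of_pow_eq_one hcc1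
      obtain ⟨x, hx, -⟩ := hcyc'
      have hτx : τ x = x := Or.resolve_left (hdisj x) hx
      have hccb : cc ^ b = 1 := by rw [← hbord]; exact pow_orderOf_eq_one cc
      have hCmb : (C ^ (m * b)) x = x := by
        rw [pow_mul, hEq, (hdisj.commute).mul_pow, Equiv.Perm.mul_apply,
          Equiv.Perm.pow_apply_eq_self_of_apply_eq_self hτx, hccb]
        rfl
      have hCxne : C x ≠ x := by
        have hmem := Finset.mem_univ x
        rw [← hCx_univ, Equiv.Perm.mem_support] at hmem
        exact hmem
      have hCmb1 : C ^ (m * b) = 1 := (hcyc.pow_eq_one_iff' hCxne).mpr hCmb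
      have hndvd2 : n ∣ m * b := by rw [← horder]; exact orderOf_dvd_of_pow_eq_one hCmb1
      have hcop : Nat.Coprime n0 (m / d) := by
        have h0 : 0 < Nat.gcd m n := hd ▸ hd_pos
        have hco := Nat.coprime_div_gcd_div_gcd h0
        have hn_div : n / Nat.gcd m n = n0 := by
          rw [← hd, hn0]
          exact Nat.mul_div_cancel _ hd_pos
        have hm_div : m / Nat.gcd m n = m / d := by rw [hd]
        rw [hn_div, hm_div] at hco
        exact hco.symm
      have hdvd2 : n0 ∣ b := by
        obtain ⟨k, hk⟩ := hdm
        have hkd : k = m / d := by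
          rw [hk]
          exact (Nat.mul_div_cancel_left k hd_pos).symm
        have ha : n0 * d ∣ d * (k * b) := by
          rw [← mul_assoc, ← hk, ← hn0]
          exact hndvd2
        have hb' : d * n0 ∣ d * (k * b) := by rwa [mul_comm n0 d] at ha
        have hc' : n0 ∣ k * b := (Nat.mul_dvd_mul_iff_left hd_pos).mp hb'
        have hcop' : Nat.Coprime n0 k := by rwa [← hkd] at hcop
        exact Nat.Coprime.dvd_of_dvd_mul_left hcop' hc'
      exact Nat.dvd_antisymm hdvd1 hdvd2
    have hsup_pow : (C ^ m).support = C.support :=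
      hcyc.support_pow_eq_iff.mpr (by rw [horder]; exact hndvd)
    have hrep := Multiset.eq_replicate_card.mpr hall
    have hcard : Multiset.card (C ^ m).cycleType = d := by
      have hsum := Equiv.Perm.sum_cycleType (C ^ m)
      rw [hrep, Multiset.sum_replicate, smul_eq_mul, hsup_pow, hsupp] at hsum
      refine Nat.eq_of_mul_eq_mul_right hn0pos ?_
      rw [hsum, hn0]
      ring
    rw [hcard] at hrep
    unfold cycleTypePoly
    rw [hrep, Multiset.sum_replicate, smul_eq_mul, Multiset.map_replicate,
      Multiset.prod_replicate]
    have hdn : d * n0 = n := by rw [hn0]; ring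
    rw [hdn, Nat.sub_self, pow_zero, one_mul]

/-- Let `C` be an `n`-cycle in `S_n`, `d = gcd(m,n)` and `n₀ = n/d`.  For any
partition `μ` of `n`, `Tr_{π_μ}(C^m) = Σ_{|λ|=d} (dim π_λ) c_{λ,n₀}^μ`, where the
`π_μ` (characterized by the Frobenius character formula), the dimensions `dim π_λ`
(characterized by `p_1^d = Σ_λ (dim π_λ) s_λ`), and the coefficients `c_{λ,n₀}^μ`
(defined by `Ψ_{n₀}(s_λ) = Σ_μ c_{λ,n₀}^μ s_μ`) are as indicated. -/
theorem stmt12 (m n d n0 : ℕ) (hm : 0 < m) (hn : 0 < n)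
    (hd : d = Nat.gcd m n) (hn0pos : 0 < n0) (hn0 : n = n0 * d)
    (s : (ℕ → ℕ) → SymmFnC) (hs : IsSchurFamilyC s)
    (V : n.Partition → Type) [∀ μ, AddCommGroup (V μ)] [∀ μ, Module ℂ (V μ)]
    [∀ μ, FiniteDimensional ℂ (V μ)]
    (π : ∀ μ, Representation ℂ (Equiv.Perm (Fin n)) (V μ))
    (hfrob : ∀ σ : Equiv.Perm (Fin n),
      cycleTypePoly n σ
        = ∑ μ : n.Partition, (LinearMap.trace ℂ (V μ) (π μ σ)) • s (partsOf μ))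
    (D : d.Partition → ℕ)
    (hD : psymNC 1 ^ d = ∑ lam : d.Partition, (D lam : ℂ) • s (partsOf lam))
    (c : d.Partition → n.Partition → ℂ)
    (hc : ∀ lam : d.Partition,
      adamsC ⟨n0, hn0pos⟩ (s (partsOf lam)) = ∑ μ : n.Partition, c lam μ • s (partsOf μ))
    (C : Equiv.Perm (Fin n)) (hC : C.cycleType = {n})
    (μ : n.Partition) :
    LinearMap.trace ℂ (V μ) (π μ (C ^ m))
      = ∑ lam : d.Partition, (D lam : ℂ) * c lam μ := by
  have hA := cycleTypePoly_pow hm hn hd hn0pos hn0 C hC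
  have hB : adamsC ⟨n0, hn0pos⟩ (psymNC 1 ^ d) = psymNC n0 ^ d := by
    rw [map_pow]
    exact congrArg (· ^ d) (adams_psym1 ⟨n0, hn0pos⟩)
  have hC2 : adamsC ⟨n0, hn0pos⟩ (psymNC 1 ^ d)
      = ∑ ν : n.Partition, (∑ lam : d.Partition, (D lam : ℂ) * c lam ν) • s (partsOf ν) := by
    rw [hD, map_sum]
    have hstep : ∀ lam : d.Partition,
        adamsC ⟨n0, hn0pos⟩ ((D lam : ℂ) • s (partsOf lam))
          = ∑ ν : n.Partition, ((D lam : ℂ) * c lam ν) • s (partsOf ν) := by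
      intro lam
      rw [map_smul, hc lam, Finset.smul_sum]
      exact Finset.sum_congr rfl (fun ν _ => by rw [smul_smul])
    rw [Finset.sum_congr rfl (fun lam _ => hstep lam), Finset.sum_comm]
    exact Finset.sum_congr rfl (fun ν _ => by rw [Finset.sum_smul])
  have hkey : ∑ ν : n.Partition,
      ((LinearMap.trace ℂ (V ν) (π ν (C ^ m)))
        - ∑ lam : d.Partition, (D lam : ℂ) * c lam ν) • s (partsOf ν) = 0 := by
    simp only [sub_smul]
    rw [Finset.sum_sub_distrib, ← hfrob (C ^ m), hA, ← hB, hC2, sub_self]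
  exact sub_eq_zero.mp (schur_coeffs_unique hn s hs _ hkey μ)
end

section
/- Consider the polynomial ring ℂ[p_2,…,p_n, p̃_2,…,p̃_m] and the elements E_i := m·p_i − n·p̃_i for 2 ≤ i ≤ m+n−1, where p_i (resp. p̃_i) denote the power sums in variables x_1,…,x_n (resp. x̃_1,…,x̃_m), expressed as polynomials in the generators via Newton's identities. Let H_2 and H̃_2 be the Calogero-Moser operators whose action on power sums satisfies H_2(p_i) = (1+c) i(i−1) p_{i−2} − i c Σ_{s=0}^{i−2} p_s p_{i−2−s} with c = m/n for H_2 and c = n/m for H̃_2. Then for H := n H_2 + m H̃_2 one has (1/(mn)) H(E_i) = ((m+n)/(mn)) i(i−1) E_{i−2} − (i/(mn)) Σ_{s=0}^{i−2} ( m p_{i−2−s} E_s + n p̃_s E_{i−2−s} ), so in particular H(E_i) lies in the ideal generated by E_j with j < i. -/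
open MvPolynomial

/-- The polynomial ring `ℚ[p_2,…, p̃_2,…]` in the two families of power sums
(we allow all indices `≥ 2`; the statement only uses `p_i` for `2 ≤ i ≤ m+n-1`). -/
abbrev Amn : Type := MvPolynomial (ℕ ⊕ ℕ) ℚ

/-- The power sums `p_i` in the variables `x_1,…,x_n`, as elements of `Amn`, with the
conventions `p_0 = n`, `p_1 = 0`. -/
noncomputable def Pgen (n : ℕ) : ℕ → Amn := fun i =>
  if i = 0 then (n : Amn) else if i = 1 then 0 else X (Sum.inl i)

/-- The power sums `p̃_i` in the variables `x̃_1,…,x̃_m`, with `p̃_0 = m`, `p̃_1 = 0`. -/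
noncomputable def Ptgen (m : ℕ) : ℕ → Amn := fun i =>
  if i = 0 then (m : Amn) else if i = 1 then 0 else X (Sum.inr i)

/-- Let `E_i = m p_i - n p̃_i` and let `H₂`, `H̃₂` be the Calogero-Moser operators,
acting on the generators by
`H₂(p_i) = (1+c) i(i-1) p_{i-2} - i c Σ_{s=0}^{i-2} p_s p_{i-2-s}` with `c = m/n`
(and `H₂(p̃_i) = 0`), and symmetrically for `H̃₂` with `c = n/m`.  Then for
`H = n H₂ + m H̃₂` and `2 ≤ i ≤ m+n-1`:
`(1/mn) H(E_i) = ((m+n)/mn) i(i-1) E_{i-2}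
   - (i/mn) Σ_{s=0}^{i-2} (m p_{i-2-s} E_s + n p̃_s E_{i-2-s})`,
so in particular `H(E_i)` lies in the ideal generated by the `E_j` with `j < i`. -/
theorem stmt15 (m n : ℕ) (hm : 0 < m) (hn : 0 < n)
    (H2 Ht2 : Amn →ₗ[ℚ] Amn)
    (hH2p : ∀ i, 2 ≤ i → H2 (Pgen n i)
      = ((1 + (m : ℚ) / (n : ℚ)) * (i : ℚ) * ((i : ℚ) - 1)) • Pgen n (i - 2)
        - ((i : ℚ) * ((m : ℚ) / (n : ℚ))) •
            ∑ s ∈ Finset.range (i - 1), Pgen n s * Pgen n (i - 2 - s))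
    (hH2t : ∀ i, 2 ≤ i → H2 (Ptgen m i) = 0)
    (hHt2p : ∀ i, 2 ≤ i → Ht2 (Pgen n i) = 0)
    (hHt2t : ∀ i, 2 ≤ i → Ht2 (Ptgen m i)
      = ((1 + (n : ℚ) / (m : ℚ)) * (i : ℚ) * ((i : ℚ) - 1)) • Ptgen m (i - 2)
        - ((i : ℚ) * ((n : ℚ) / (m : ℚ))) •
            ∑ s ∈ Finset.range (i - 1), Ptgen m s * Ptgen m (i - 2 - s))
    (E : ℕ → Amn) (hE : ∀ i, E i = (m : ℚ) • Pgen n i - (n : ℚ) • Ptgen m i)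
    (H : Amn →ₗ[ℚ] Amn) (hH : H = (n : ℚ) • H2 + (m : ℚ) • Ht2)
    (i : ℕ) (h2i : 2 ≤ i) (hile : i ≤ m + n - 1) :
    ((1 : ℚ) / ((m : ℚ) * (n : ℚ))) • H (E i)
      = (((m : ℚ) + (n : ℚ)) / ((m : ℚ) * (n : ℚ)) * (i : ℚ) * ((i : ℚ) - 1)) • E (i - 2)
        - ((i : ℚ) / ((m : ℚ) * (n : ℚ))) •
            ∑ s ∈ Finset.range (i - 1),
              ((m : ℚ) • (Pgen n (i - 2 - s) * E s) + (n : ℚ) • (Ptgen m s * E (i - 2 - s)))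
    ∧ H (E i) ∈ Ideal.span (E '' {j | j < i}) := by

  have hm' : (m : ℚ) ≠ 0 := Nat.cast_ne_zero.mpr hm.ne'
  have hn' : (n : ℚ) ≠ 0 := Nat.cast_ne_zero.mpr hn.ne'
  have e1 : H (E i) = ((n:ℚ)*m) • H2 (Pgen n i) - ((n:ℚ)*m) • Ht2 (Ptgen m i) := by
    rw [hH, hE i]
    simp only [LinearMap.add_apply, LinearMap.smul_apply, map_sub, map_smul,
      hH2t i h2i, hHt2p i h2i, smul_zero]
    module
  have e2 : ∑ s ∈ Finset.range (i - 1),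
        ((m : ℚ) • (Pgen n (i - 2 - s) * E s) + (n : ℚ) • (Ptgen m s * E (i - 2 - s)))
      = ((m:ℚ)*m) • (∑ s ∈ Finset.range (i - 1), Pgen n s * Pgen n (i - 2 - s))
        - ((n:ℚ)*n) • (∑ s ∈ Finset.range (i - 1), Ptgen m s * Ptgen m (i - 2 - s)) := by
    rw [Finset.smul_sum, Finset.smul_sum, ← Finset.sum_sub_distrib]
    refine Finset.sum_congr rfl fun s hs => ?_
    simp only [hE, Algebra.smul_def]
    push_cast
    ring
  have heq : ((1 : ℚ) / ((m : ℚ) * (n : ℚ))) • H (E i)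
      = (((m : ℚ) + (n : ℚ)) / ((m : ℚ) * (n : ℚ)) * (i : ℚ) * ((i : ℚ) - 1)) • E (i - 2)
        - ((i : ℚ) / ((m : ℚ) * (n : ℚ))) •
            ∑ s ∈ Finset.range (i - 1),
              ((m : ℚ) • (Pgen n (i - 2 - s) * E s) + (n : ℚ) • (Ptgen m s * E (i - 2 - s))) := by
    rw [e1, e2, hH2p i h2i, hHt2t i h2i, hE (i - 2)]
    match_scalars <;> field_simp <;> ring
  refine ⟨heq, ?_⟩
  have h3 : H (E i) = ((m:ℚ)*n) • (((1 : ℚ) / ((m : ℚ) * (n : ℚ))) • H (E i)) := by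
    rw [smul_smul, mul_one_div, div_self (mul_ne_zero hm' hn'), one_smul]
  rw [h3, heq]
  apply Submodule.smul_of_tower_mem
  apply Submodule.sub_mem
  · apply Submodule.smul_of_tower_mem
    exact Ideal.subset_span ⟨i - 2, by simp only [Set.mem_setOf_eq]; omega, rfl⟩
  · apply Submodule.smul_of_tower_mem
    apply Ideal.sum_mem
    intro s hs
    have hs' := Finset.mem_range.mp hs
    apply Ideal.add_mem
    · apply Submodule.smul_of_tower_mem
      exact Ideal.mul_mem_left _ _
        (Ideal.subset_span ⟨s, by simp only [Set.mem_setOf_eq]; omega, rfl⟩)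
    · apply Submodule.smul_of_tower_mem
      exact Ideal.mul_mem_left _ _
        (Ideal.subset_span ⟨i - 2 - s, by simp only [Set.mem_setOf_eq]; omega, rfl⟩)
end
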